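/- Let α = (3+√5)/2 and for each natural number n ≥ 2 let α_n denote the unique real root of P_{2n}(x) = x^(2n) − x^(n+1) − x^n − x^(n−1) + 1 in (2^(1/n), 3^(1/n)) (which equals the house of P_{2n}). Then the sequence (α_n)^(2n) converges to α^2 = (7+3√5)/2 = 6.854... as n tends to infinity. Moreover, α^2 < (α_n)^(2n) < α^(2n/(n−1)) for all sufficiently large n. -/

import Mathlib

open Real Filter

lemma P2n_aux (n : ℕ) (hn : 2 ≤ n) (x : ℝ)
    (h1 : (2:ℝ) ^ ((1:ℝ)/(n:ℝ)) < x) (h2 : x < (3:ℝ) ^ ((1:ℝ)/(n:ℝ)))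
    (heq : x ^ (2*n) - x ^ (n+1) - x ^ n - x ^ (n-1) + 1 = 0) :
    1 < x ∧ x < 1 + 2/(n:ℝ) ∧ 2 < x ^ n ∧ x ^ n < 3 ∧
      (x + 1/x + 1) * x ^ n = (x ^ n)^2 + 1 := by
  have hnne : (n:ℝ) ≠ 0 := by
    have : (0:ℝ) < n := by exact_mod_cast Nat.lt_of_lt_of_le (by norm_num) hn
    exact ne_of_gt this
  have hb2 : ((2:ℝ) ^ ((1:ℝ)/(n:ℝ))) ^ n = 2 := by
    rw [← Real.rpow_natCast ((2:ℝ) ^ ((1:ℝ)/(n:ℝ))) n, ← Real.rpow_mul (by norm_num),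
      one_div, inv_mul_cancel₀ hnne, Real.rpow_one]
  have hb3 : ((3:ℝ) ^ ((1:ℝ)/(n:ℝ))) ^ n = 3 := by
    rw [← Real.rpow_natCast ((3:ℝ) ^ ((1:ℝ)/(n:ℝ))) n, ← Real.rpow_mul (by norm_num),
      one_div, inv_mul_cancel₀ hnne, Real.rpow_one]
  have hx1 : 1 < x := by
    refine lt_trans ?_ h1
    rw [Real.one_lt_rpow_iff_of_pos (by norm_num)]
    left
    constructor
    · norm_num
    · positivity
  have hnne' : n ≠ 0 := by omega
  have ht2 : 2 < x ^ n := by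
    calc (2:ℝ) = ((2:ℝ) ^ ((1:ℝ)/(n:ℝ))) ^ n := hb2.symm
      _ < x ^ n := pow_lt_pow_left₀ h1 (Real.rpow_nonneg (by norm_num) _) hnne'
  have ht3 : x ^ n < 3 := by
    calc x ^ n < ((3:ℝ) ^ ((1:ℝ)/(n:ℝ))) ^ n := pow_lt_pow_left₀ h2 (by linarith) hnne'
      _ = 3 := hb3
  have hxub : x < 1 + 2/(n:ℝ) := by
    refine lt_of_lt_of_le h2 ?_
    have hge : (-2:ℝ) ≤ 2/(n:ℝ) := by
      have h : (0:ℝ) ≤ 2/(n:ℝ) := by positivity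
      linarith
    have hbern : (3:ℝ) ≤ (1 + 2/(n:ℝ)) ^ n := by
      have := one_add_mul_le_pow hge n
      have hcalc : 1 + (n:ℝ) * (2/(n:ℝ)) = 3 := by field_simp; ring
      linarith [hcalc ▸ this]
    refine le_of_pow_le_pow_left₀ hnne' (by positivity) ?_
    rw [hb3]; exact hbern
  have hx0 : x ≠ 0 := by linarith
  have hpow1 : x ^ (2*n) = (x ^ n)^2 := by rw [Nat.mul_comm, pow_mul]
  have hpow2 : x ^ (n+1) = x ^ n * x := pow_succ x n
  have hpow3 : x ^ (n-1) * x = x ^ n := by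
    rw [← pow_succ]
    congr 1
    omega
  have h2' : (x ^ n)^2 * x - (x ^ n) * x^2 - (x ^ n) * x - x ^ n + x = 0 := by
    have hx' : x * (x ^ (2*n) - x ^ (n+1) - x ^ n - x ^ (n-1) + 1) = 0 := by
      rw [heq, mul_zero]
    rw [hpow1, hpow2] at hx'
    nlinarith [hpow3, hx']
  refine ⟨hx1, hxub, ht2, ht3, ?_⟩
  have h1x : (1/x) * x = 1 := by field_simp
  apply mul_right_cancel₀ hx0
  linear_combination (-1 : ℝ) * h2' + x ^ n * h1x
lemma num_aux (nn : ℝ) (h : 40 ≤ nn) : (2/nn)^2 < 1/(nn-1) := by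
  have hm : (0:ℝ) < nn - 1 := by linarith
  rw [div_pow, div_lt_div_iff₀ (by positivity) hm]
  nlinarith [sq_nonneg (nn-3)]

lemma lt_of_s_rel (s t γ : ℝ) (ht0 : 0 < t) (hγ1 : 1 < γ) (hst : s * t = t^2 + 1)
    (hsγ : s < γ + 1/γ) : t < γ := by
  by_contra hcon
  push_neg at hcon
  have hγ0 : (0:ℝ) < γ := by linarith
  have hinvγ : γ * (1/γ) = 1 := by field_simp
  have hq : 0 ≤ (t - γ) * (t*γ - 1) := mul_nonneg (by linarith) (by nlinarith)
  nlinarith [hq, hinvγ, hst, hsγ, mul_pos ht0 hγ0]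

set_option maxHeartbeats 1000000 in
theorem house_P2n_pow_tendsto (a : ℕ → ℝ)
    (ha : ∀ n : ℕ, 2 ≤ n →
      a n ∈ Set.Ioo ((2 : ℝ) ^ ((1 : ℝ) / (n : ℝ))) ((3 : ℝ) ^ ((1 : ℝ) / (n : ℝ))) ∧
      (a n) ^ (2 * n) - (a n) ^ (n + 1) - (a n) ^ n - (a n) ^ (n - 1) + 1 = 0) :
    Filter.Tendsto (fun n : ℕ => (a n) ^ (2 * n)) Filter.atTop
      (nhds (((3 + Real.sqrt 5) / 2) ^ 2)) ∧
    ((3 + Real.sqrt 5) / 2) ^ 2 = (7 + 3 * Real.sqrt 5) / 2 ∧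
    (∀ᶠ n : ℕ in Filter.atTop,
      ((3 + Real.sqrt 5) / 2) ^ 2 < (a n) ^ (2 * n) ∧
      (a n) ^ (2 * n) < ((3 + Real.sqrt 5) / 2) ^ ((2 * (n : ℝ)) / ((n : ℝ) - 1))) := by
  set r := Real.sqrt 5 with hrdef
  have hr2 : r ^ 2 = 5 := Real.sq_sqrt (by norm_num)
  have hr0 : 0 < r := by rw [hrdef]; positivity
  have hrl : 2.23 < r := by nlinarith
  have hru : r < 2.24 := by nlinarith
  set α : ℝ := (3 + r) / 2 with hαdef
  clear_value r α
  have hα1 : 1 < α := by rw [hαdef]; linarith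
  have hα0 : 0 < α := by linarith
  -- pointwise facts
  have key : ∀ n : ℕ, 2 ≤ n → 1 < a n ∧ a n < 1 + 2/(n:ℝ) ∧ 2 < (a n) ^ n ∧ (a n) ^ n < 3 ∧
      (a n + 1/(a n) + 1) * (a n) ^ n = ((a n) ^ n) ^ 2 + 1 := by
    intro n hn
    obtain ⟨⟨h1, h2⟩, heq⟩ := ha n hn
    exact P2n_aux n hn (a n) h1 h2 heq
  -- limit of a n
  have hx : Filter.Tendsto (fun n : ℕ => a n) Filter.atTop (nhds 1) := by
    have hub : Filter.Tendsto (fun n : ℕ => 1 + 2/(n:ℝ)) Filter.atTop (nhds 1) := by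
      have := tendsto_const_nhds (x := (1:ℝ)) (f := Filter.atTop (α := ℕ))
      have h2 := this.add (tendsto_const_div_atTop_nhds_zero_nat 2)
      rwa [add_zero] at h2
    refine tendsto_of_tendsto_of_tendsto_of_le_of_le' tendsto_const_nhds hub ?_ ?_
    · filter_upwards [Filter.eventually_ge_atTop 2] with n hn
      exact (key n hn).1.le
    · filter_upwards [Filter.eventually_ge_atTop 2] with n hn
      exact (key n hn).2.1.le
  have hxinv : Filter.Tendsto (fun n : ℕ => 1/(a n)) Filter.atTop (nhds 1) := by
    simpa using hx.inv₀ one_ne_zero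
  have hs : Filter.Tendsto (fun n : ℕ => a n + 1/(a n) + 1) Filter.atTop (nhds 3) := by
    have h := (hx.add hxinv).add (tendsto_const_nhds (x := (1:ℝ)))
    rwa [show (1:ℝ) + 1 + 1 = 3 by norm_num] at h
  have h5 : Filter.Tendsto (fun n : ℕ => (a n + 1/(a n) + 1)^2 - 4) Filter.atTop (nhds 5) := by
    have h := (hs.pow 2).sub (tendsto_const_nhds (x := (4:ℝ)))
    rwa [show (3:ℝ)^2 - 4 = 5 by norm_num] at h
  have hsq : Filter.Tendsto (fun n : ℕ => Real.sqrt ((a n + 1/(a n) + 1)^2 - 4))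
      Filter.atTop (nhds r) := by
    rw [hrdef]; exact h5.sqrt
  have ht : Filter.Tendsto (fun n : ℕ => (a n) ^ n) Filter.atTop (nhds α) := by
    have hF : Filter.Tendsto
        (fun n : ℕ => ((a n + 1/(a n) + 1) + Real.sqrt ((a n + 1/(a n) + 1)^2 - 4))/2)
        Filter.atTop (nhds α) := by
      rw [hαdef]
      exact (hs.add hsq).div_const 2
    refine Filter.Tendsto.congr' ?_ hF
    filter_upwards [Filter.eventually_ge_atTop 2] with n hn
    obtain ⟨hx1, hxub, ht2, ht3, hst⟩ := key n hn
    set t := (a n) ^ n with htdef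
    set s := a n + 1/(a n) + 1 with hsdef
    clear_value t s
    have ht0 : (0:ℝ) < t := by linarith
    have h2ts : 0 ≤ 2*t - s := by nlinarith
    have hsq2 : s^2 - 4 = (2*t - s)^2 := by linear_combination 4 * hst
    rw [hsq2, Real.sqrt_sq h2ts]
    ring
  have habs : Filter.Tendsto (fun n : ℕ => (a n) ^ (2*n)) Filter.atTop (nhds (α ^ 2)) := by
    refine (ht.pow 2).congr fun n => ?_
    rw [← pow_mul, Nat.mul_comm]
  refine ⟨habs, ?_, ?_⟩
  · rw [hαdef]; linear_combination hr2 / 4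
  · filter_upwards [Filter.eventually_ge_atTop 40] with n hn
    have hn2 : 2 ≤ n := by omega
    obtain ⟨hx1, hxub, ht2, ht3, hst⟩ := key n hn2
    set t := (a n) ^ n with htdef
    clear_value t
    have ht0 : (0:ℝ) < t := by linarith
    have hx0 : (0:ℝ) < a n := by linarith
    have hinvx : a n * (1/(a n)) = 1 := by field_simp
    have hs3 : 3 < a n + 1/(a n) + 1 := by
      nlinarith [mul_pos (show (0:ℝ) < 1/(a n) by positivity) (pow_pos (sub_pos.2 hx1) 2)]
    have hpow2n : (a n) ^ (2*n) = t^2 := by rw [htdef, ← pow_mul, Nat.mul_comm]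
    have htgt : α < t := by
      rw [hαdef]
      nlinarith [mul_pos ht0 (sub_pos.2 hs3), hr0, hr2]
    constructor
    · rw [hpow2n]
      exact pow_lt_pow_left₀ htgt hα0.le two_ne_zero
    · -- upper bound
      have hnR : (40:ℝ) ≤ (n:ℝ) := by exact_mod_cast hn
      have hm : (0:ℝ) < (n:ℝ) - 1 := by linarith
      set e1 := (n:ℝ)/((n:ℝ)-1) with he1
      have he1' : e1 = 1 + 1/((n:ℝ)-1) := by rw [he1]; field_simp; ring
      set γ := α ^ e1 with hγ
      clear_value e1 γ
      have hγpos : 0 < γ := by rw [hγ]; exact Real.rpow_pos_of_pos hα0 _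
      have hBexp : 1 + 1/(2*((n:ℝ)-1)) ≤ Real.exp (1/(2*((n:ℝ)-1))) := by
        have := Real.add_one_le_exp (1/(2*((n:ℝ)-1)))
        linarith
      have hehalf : Real.exp ((1:ℝ)/2) ≤ α := by
        have hee : Real.exp ((1:ℝ)/2) * Real.exp ((1:ℝ)/2) = Real.exp 1 := by
          rw [← Real.exp_add]; norm_num
        have he2 : Real.exp 1 < 2.72 := lt_trans Real.exp_one_lt_d9 (by norm_num)
        have hα26 : (2.6:ℝ) < α := by rw [hαdef]; linarith
        have hsqlt : Real.exp ((1:ℝ)/2) ^ 2 < α ^ 2 := by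
          have h1 : Real.exp ((1:ℝ)/2) ^ 2 < 2.72 := by rw [sq, hee]; exact he2
          have h2 : (2.72:ℝ) < α ^ 2 := by nlinarith
          linarith
        exact le_of_lt (lt_of_pow_lt_pow_left₀ 2 hα0.le hsqlt)
      have hB : (1 + 1/(2*((n:ℝ)-1))) ^ (((n:ℝ)-1) : ℝ) ≤ α := by
        calc (1 + 1/(2*((n:ℝ)-1))) ^ (((n:ℝ)-1) : ℝ)
            ≤ (Real.exp (1/(2*((n:ℝ)-1)))) ^ (((n:ℝ)-1) : ℝ) :=
              Real.rpow_le_rpow (by positivity) hBexp (by linarith)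
          _ = Real.exp ((1/(2*((n:ℝ)-1))) * ((n:ℝ)-1)) := (Real.exp_mul _ _).symm
          _ = Real.exp ((1:ℝ)/2) := by
              congr 1
              field_simp
          _ ≤ α := hehalf
      have hmono : 1 + 1/(2*((n:ℝ)-1)) ≤ α ^ ((1:ℝ)/((n:ℝ)-1)) := by
        have h := Real.rpow_le_rpow (by positivity) hB
          (le_of_lt (show (0:ℝ) < 1/((n:ℝ)-1) by positivity))
        rwa [← Real.rpow_mul (by positivity), mul_one_div, div_self (ne_of_gt hm),
          Real.rpow_one] at h
      have hγlb : α * (1 + 1/(2*((n:ℝ)-1))) ≤ γ := by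
        have hsplit : γ = α * α ^ ((1:ℝ)/((n:ℝ)-1)) := by
          rw [hγ, he1', Real.rpow_add hα0, Real.rpow_one]
        rw [hsplit]
        exact mul_le_mul_of_nonneg_left hmono hα0.le
      have hγub : γ ≤ α^2 := by
        have h := Real.rpow_le_rpow_of_exponent_le hα1.le
          (by rw [he1']
              have h1 : 1/((n:ℝ)-1) ≤ 1 := by rw [div_le_one hm]; linarith
              linarith : e1 ≤ 2)
        rw [hγ]
        rwa [show (2:ℝ) = ((2:ℕ):ℝ) by norm_num, Real.rpow_natCast] at h
      have hγgt : α < γ := by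
        have h := Real.rpow_lt_rpow_of_exponent_lt hα1
          (by rw [he1']
              have h1 : (0:ℝ) < 1/((n:ℝ)-1) := by positivity
              linarith : (1:ℝ) < e1)
        rw [hγ]
        rwa [Real.rpow_one] at h
      -- bound on γ + 1/γ from below
      have hα3 : α + 1/α = 3 := by
        rw [hαdef]
        field_simp
        linear_combination hr2
      have h1γ : 1/α - (γ - α)/α^2 ≤ 1/γ := by
        rw [div_sub_div _ _ (ne_of_gt hα0) (by positivity), div_le_div_iff₀ (by positivity) hγpos]
        nlinarith [sq_nonneg (γ - α)]
      have hu : α/(2*((n:ℝ)-1)) ≤ γ - α := by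
        have h := hγlb
        rw [mul_add, mul_one, mul_one_div] at h
        linarith
      have hαsq : (6.8:ℝ) ≤ α^2 := by rw [hαdef]; nlinarith
      have h85 : (0.85:ℝ) ≤ 1 - 1/α^2 := by
        have h1 : 1/α^2 ≤ 1/(6.8:ℝ) := by
          apply one_div_le_one_div_of_le (by norm_num) hαsq
        linarith [h1]
      have hu2 : 1/((n:ℝ)-1) ≤ (γ - α)*(1 - 1/α^2) := by
        have hstep1 : (1:ℝ)/((n:ℝ)-1) ≤ (α/(2*((n:ℝ)-1))) * 0.85 := by
          rw [div_mul_eq_mul_div, div_le_div_iff₀ hm (by positivity)]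
          nlinarith
        refine le_trans hstep1 ?_
        refine mul_le_mul hu h85 (by norm_num) ?_
        have := mul_pos hα0 (show (0:ℝ) < 1/(2*((n:ℝ)-1)) by positivity)
        nlinarith [hu]
      have hB2 : 3 + 1/((n:ℝ)-1) ≤ γ + 1/γ := by
        have hring : γ + 1/α - (γ - α)/α^2 = (α + 1/α) + (γ - α)*(1 - 1/α^2) := by ring
        have : 3 + 1/((n:ℝ)-1) ≤ γ + 1/α - (γ - α)/α^2 := by
          rw [hring, hα3]
          linarith
        linarith [h1γ]
      -- bound on a n + 1/(a n) from above
      have hix : 1/(a n) ≤ 1 := by rw [div_le_one hx0]; linarith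
      have e1eq : a n + 1/(a n) - 2 = (1/(a n))*(a n - 1)^2 := by
        field_simp
        ring
      have e2 : (1/(a n))*(a n - 1)^2 ≤ (a n - 1)^2 := mul_le_of_le_one_left (sq_nonneg _) hix
      have e3 : (a n - 1)^2 ≤ (2/(n:ℝ))^2 := by
        apply pow_le_pow_left₀ (by linarith) (by linarith)
      have e4 : (2/(n:ℝ))^2 < 1/((n:ℝ)-1) := num_aux (n:ℝ) hnR
      have hsγ : a n + 1/(a n) + 1 < γ + 1/γ := by linarith
      -- conclude t < γ
      have htγ : t < γ := lt_of_s_rel (a n + 1/(a n) + 1) t γ ht0 (by linarith) hst hsγ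
      rw [hpow2n]
      have hfin : t^2 < γ^2 := pow_lt_pow_left₀ htγ ht0.le two_ne_zero
      have hγ2 : γ^2 = α ^ (2*(n:ℝ)/((n:ℝ)-1)) := by
        rw [hγ, ← Real.rpow_natCast (α ^ e1) 2, ← Real.rpow_mul hα0.le]
        congr 1
        rw [he1]
        push_cast
        ring
      rw [← hγ2]
      exact hfin
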